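/- Let G be a connected graph containing a vertex v with deg(v) ≥ 3 such that N(v) is an independent set, every vertex of N(v) has degree at least two, and G − N[v] is connected. Then G does not belong to G^cs. -/

import Mathlib

open SimpleGraph
open scoped Classical

variable {V : Type*} [Fintype V]

noncomputable def setWeight (w : V → ℝ) (A : Set V) : ℝ :=
  ∑ v : V, if v ∈ A then w v else 0

def IsComponentOf (G : SimpleGraph V) (S C : Set V) : Prop :=
  ∃ c : (G.induce S).ConnectedComponent,
    C = Subtype.val '' {x : ↥S | (G.induce S).connectedComponentMk x = c}

def Touches (G : SimpleGraph V) (C D : Set V) : Prop :=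
  ∃ a ∈ C, ∃ b ∈ D, G.Adj a b

def IsSafeSet (G : SimpleGraph V) (w : V → ℝ) (S : Set V) : Prop :=
  S.Nonempty ∧ S ≠ Set.univ ∧
    ∀ C D : Set V, IsComponentOf G S C → IsComponentOf G Sᶜ D → Touches G C D →
      setWeight w D ≤ setWeight w C

def IsConnSafeSet (G : SimpleGraph V) (w : V → ℝ) (S : Set V) : Prop :=
  IsSafeSet G w S ∧ (G.induce S).Connected

noncomputable def safeNumber (G : SimpleGraph V) (w : V → ℝ) : ℝ :=
  sInf (setWeight w '' {S | IsSafeSet G w S})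

noncomputable def connSafeNumber (G : SimpleGraph V) (w : V → ℝ) : ℝ :=
  sInf (setWeight w '' {S | IsConnSafeSet G w S})

def InGcs (G : SimpleGraph V) : Prop :=
  ∀ w : V → ℝ, (∀ v, 0 < w v) → safeNumber G w = connSafeNumber G w

lemma setWeight_eq_sum (w : V → ℝ) (A : Set V) :
    setWeight w A = ∑ x ∈ A.toFinset, w x := by
  rw [setWeight, ← Finset.sum_filter]
  congr 1
  ext x; simp

lemma setWeight_nonneg (w : V → ℝ) (hw : ∀ x, 0 ≤ w x) (A : Set V) : 0 ≤ setWeight w A := by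
  rw [setWeight_eq_sum]
  exact Finset.sum_nonneg fun i _ => hw i

lemma setWeight_mono (w : V → ℝ) (hw : ∀ x, 0 ≤ w x) {A B : Set V} (h : A ⊆ B) :
    setWeight w A ≤ setWeight w B := by
  rw [setWeight_eq_sum, setWeight_eq_sum]
  exact Finset.sum_le_sum_of_subset_of_nonneg (Set.toFinset_subset_toFinset.2 h)
    (fun i _ _ => hw i)

lemma setWeight_insert (w : V → ℝ) (x : V) (A : Set V) (hx : x ∉ A) :
    setWeight w (insert x A) = w x + setWeight w A := by
  have key : ∀ u : V, (@ite ℝ (u ∈ insert x A) (Classical.propDecidable _) (w u) 0) =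
      (if u = x then w u else 0) + (if u ∈ A then w u else 0) := by
    intro u
    by_cases h1 : u = x
    · subst h1; simp [hx]
    · simp [h1, Set.mem_insert_iff]
  have h1 : setWeight w (insert x A)
      = ∑ u : V, ((if u = x then w u else 0) + (if u ∈ A then w u else 0)) :=
    Finset.sum_congr rfl (fun u _ => key u)
  rw [h1, Finset.sum_add_distrib, Finset.sum_ite_eq' Finset.univ x w]
  simp [setWeight]

lemma setWeight_singleton (w : V → ℝ) (x : V) : setWeight w {x} = w x := by
  rw [setWeight_eq_sum, Set.toFinset_singleton, Finset.sum_singleton]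

lemma setWeight_pair (w : V → ℝ) {a b : V} (hab : a ≠ b) :
    setWeight w {a, b} = w a + w b := by
  rw [show ({a, b} : Set V) = insert a {b} from rfl, setWeight_insert w a _ (by simp [hab]),
    setWeight_singleton]

lemma setWeight_triple (w : V → ℝ) {a b c : V} (hab : a ≠ b) (hac : a ≠ c) (hbc : b ≠ c) :
    setWeight w {a, b, c} = w a + w b + w c := by
  rw [show ({a, b, c} : Set V) = insert a {b, c} from rfl,
    setWeight_insert w a _ (by simp [hab, hac]), setWeight_pair w hbc, add_assoc]

lemma reachable_of_isolated {α : Type*} (H : SimpleGraph α) {x z : α}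
    (hx : ∀ y, ¬ H.Adj x y) (h : H.Reachable x z) : x = z := by
  obtain ⟨p⟩ := h
  cases p with
  | nil => rfl
  | cons h _ => exact absurd h (hx _)

lemma reachable_mono (G : SimpleGraph V) {A B : Set V} (hAB : A ⊆ B) {x y : ↥A}
    (h : (G.induce A).Reachable x y) :
    (G.induce B).Reachable ⟨x.1, hAB x.2⟩ ⟨y.1, hAB y.2⟩ :=
  h.map (G.induceHomOfLE hAB).toHom

lemma mem_component_iff (G : SimpleGraph V) (S : Set V) (x : ↥S) (z : V) :
    z ∈ (Subtype.val '' {y : ↥S |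
        (G.induce S).connectedComponentMk y = (G.induce S).connectedComponentMk x}) ↔
      ∃ hz : z ∈ S, (G.induce S).Reachable ⟨z, hz⟩ x := by
  constructor
  · rintro ⟨⟨z, hz⟩, hmk, rfl⟩
    exact ⟨hz, (SimpleGraph.ConnectedComponent.eq).1 hmk⟩
  · rintro ⟨hz, hr⟩
    exact ⟨⟨z, hz⟩, SimpleGraph.ConnectedComponent.eq.2 hr, rfl⟩

lemma isComponentOf_self (G : SimpleGraph V) (T : Set V) (hT : (G.induce T).Connected) :
    IsComponentOf G T T := by
  obtain ⟨t0⟩ : Nonempty ↥T := hT.nonempty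
  refine ⟨(G.induce T).connectedComponentMk t0, ?_⟩
  ext z
  rw [mem_component_iff]
  constructor
  · intro hz; exact ⟨hz, hT.preconnected _ _⟩
  · rintro ⟨hz, _⟩; exact hz

lemma isComponentOf_rep (G : SimpleGraph V) (S : Set V) (C : Set V) (h : IsComponentOf G S C) :
    ∃ x : ↥S, C = Subtype.val '' {y : ↥S |
      (G.induce S).connectedComponentMk y = (G.induce S).connectedComponentMk x} := by
  obtain ⟨c, rfl⟩ := h
  obtain ⟨x, rfl⟩ := c.exists_rep
  exact ⟨x, rfl⟩

lemma induce_adj_of_adj (G : SimpleGraph V) {S : Set V} {a b : V} (ha : a ∈ S) (hb : b ∈ S)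
    (h : G.Adj a b) : (G.induce S).Adj ⟨a, ha⟩ ⟨b, hb⟩ := by
  simpa using h

lemma component_eq_singleton (G : SimpleGraph V) (S : Set V) (x : ↥S)
    (hx : ∀ y : ↥S, ¬ (G.induce S).Adj x y) :
    (Subtype.val '' {y : ↥S |
      (G.induce S).connectedComponentMk y = (G.induce S).connectedComponentMk x}) = {x.1} := by
  ext z
  rw [mem_component_iff]
  constructor
  · rintro ⟨hz, hr⟩
    have := reachable_of_isolated _ hx hr.symm
    exact Set.mem_singleton_iff.2 (congrArg Subtype.val this).symm
  · rintro rfl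
    exact ⟨x.2, SimpleGraph.Reachable.refl _⟩

lemma subset_component (G : SimpleGraph V) {S K : Set V} (hKS : K ⊆ S)
    (hK : (G.induce K).Preconnected) (x : ↥S) (hxK : x.1 ∈ K) :
    K ⊆ Subtype.val '' {y : ↥S |
      (G.induce S).connectedComponentMk y = (G.induce S).connectedComponentMk x} := by
  intro z hz
  rw [mem_component_iff]
  exact ⟨hKS hz, reachable_mono G hKS (hK ⟨z, hz⟩ ⟨x.1, hxK⟩)⟩

lemma exists_boundary (G : SimpleGraph V) (T : Set V) {R : Set V} :
    ∀ {y t0 : ↥R}, (G.induce R).Walk y t0 → (y : V) ∉ T → (t0 : V) ∈ T →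
    ∃ p, ∃ (hp : p ∉ T), ∃ z ∈ T, G.Adj p z ∧
      ∀ (hy2 : y.1 ∈ Tᶜ), (G.induce Tᶜ).Reachable ⟨y.1, hy2⟩ ⟨p, hp⟩ := by
  intro y t0 W
  induction W with
  | nil => intro hy ht; exact absurd ht hy
  | @cons a b c h W ih =>
    intro hy ht
    by_cases hbT : (b : V) ∈ T
    · exact ⟨a.1, hy, b.1, hbT, by simpa using h, fun _ => SimpleGraph.Reachable.refl _⟩
    · obtain ⟨p, hp, z, hz, hadj, hreach⟩ := ih hbT ht
      refine ⟨p, hp, z, hz, hadj, fun hy2 => SimpleGraph.Reachable.trans ?_ (hreach hbT)⟩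
      exact SimpleGraph.Adj.reachable
        (induce_adj_of_adj G (show a.1 ∈ Tᶜ from hy) (show b.1 ∈ Tᶜ from hbT) (by simpa using h))

theorem stmt_12 (G : SimpleGraph V) (hG : G.Connected) (v : V)
    (hdeg : 3 ≤ G.degree v)
    (hind : ∀ a ∈ G.neighborSet v, ∀ b ∈ G.neighborSet v, ¬ G.Adj a b)
    (hdeg2 : ∀ a ∈ G.neighborSet v, 2 ≤ G.degree a)
    (hconn : (G.induce ((G.neighborSet v ∪ {v})ᶜ : Set V)).Connected) :
    ¬ InGcs G := by
  intro hIn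
  set R : Set V := (G.neighborSet v ∪ {v})ᶜ with hRdef
  -- basic membership facts
  have hmemR : ∀ z : V, z ∈ R ↔ (z ∉ G.neighborSet v ∧ z ≠ v) := by
    intro z; rw [hRdef]; simp only [Set.mem_compl_iff, Set.mem_union, Set.mem_singleton_iff,
      not_or]
  have hvR : v ∉ R := fun h => ((hmemR v).1 h).2 rfl
  have hNR : ∀ u ∈ G.neighborSet v, u ∉ R := fun u hu h => ((hmemR u).1 h).1 hu
  have hNv : ∀ u ∈ G.neighborSet v, u ≠ v := fun u hu => (G.adj_symm hu).ne
  have htri : ∀ z : V, z ∈ G.neighborSet v ∨ z = v ∨ z ∈ R := by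
    intro z
    by_cases h1 : z ∈ G.neighborSet v
    · exact Or.inl h1
    · by_cases h2 : z = v
      · exact Or.inr (Or.inl h2)
      · exact Or.inr (Or.inr ((hmemR z).2 ⟨h1, h2⟩))
  have hRne : R.Nonempty := by
    obtain ⟨x⟩ := hconn.nonempty
    exact ⟨x.1, x.2⟩
  -- the weight function
  set r : ℕ := Fintype.card ↥R with hrdef
  have hr0 : 0 < r := Fintype.card_pos_iff.2 hRne.to_subtype
  set ρ : ℝ := (r : ℝ)⁻¹ with hρdef
  have hρ0 : 0 < ρ := by
    rw [hρdef]; positivity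
  have hρ1 : ρ ≤ 1 := by
    rw [hρdef]
    apply inv_le_one_of_one_le₀
    exact_mod_cast Nat.one_le_iff_ne_zero.2 hr0.ne'
  set w : V → ℝ := fun x => if x ∈ R then ρ else 1 with hwdef
  have hwR : ∀ x ∈ R, w x = ρ := fun x hx => if_pos hx
  have hwNR : ∀ x, x ∉ R → w x = 1 := fun x hx => if_neg hx
  have hw0 : ∀ x, 0 < w x := by
    intro x
    by_cases h : x ∈ R
    · rw [hwR x h]; exact hρ0
    · rw [hwNR x h]; norm_num
  have hw0' : ∀ x, 0 ≤ w x := fun x => (hw0 x).le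
  have hwge : ∀ x, ρ ≤ w x := by
    intro x
    by_cases h : x ∈ R
    · rw [hwR x h]
    · rw [hwNR x h]; exact hρ1
  have hwv : w v = 1 := hwNR v hvR
  have hwu : ∀ u ∈ G.neighborSet v, w u = 1 := fun u hu => hwNR u (hNR u hu)
  have hWR : setWeight w R = 1 := by
    have hcongr : setWeight w R = ∑ _x ∈ R.toFinset, ρ :=
      (setWeight_eq_sum w R).trans
        (Finset.sum_congr (by congr!) (fun x hx => hwR x (Set.mem_toFinset.1 hx)))
    rw [hcongr, Finset.sum_const, Set.toFinset_card, nsmul_eq_mul, hρdef, ← hrdef]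
    exact mul_inv_cancel₀ (by exact_mod_cast hr0.ne')
  -- three distinct neighbors
  have hcard : 3 ≤ (G.neighborFinset v).card := hdeg
  obtain ⟨u1, hu1⟩ := Finset.card_pos.1 (show 0 < (G.neighborFinset v).card by omega)
  obtain ⟨u2, hu2⟩ := Finset.card_pos.1
    (show 0 < ((G.neighborFinset v).erase u1).card by
      rw [Finset.card_erase_of_mem hu1]; omega)
  obtain ⟨u3, hu3⟩ := Finset.card_pos.1
    (show 0 < (((G.neighborFinset v).erase u1).erase u2).card by
      rw [Finset.card_erase_of_mem hu2, Finset.card_erase_of_mem hu1]; omega)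
  have hu2N : u2 ∈ G.neighborFinset v := Finset.mem_of_mem_erase hu2
  have hu3N : u3 ∈ G.neighborFinset v := Finset.mem_of_mem_erase (Finset.mem_of_mem_erase hu3)
  have h21 : u2 ≠ u1 := Finset.ne_of_mem_erase hu2
  have h32 : u3 ≠ u2 := Finset.ne_of_mem_erase hu3
  have h31 : u3 ≠ u1 := Finset.ne_of_mem_erase (Finset.mem_of_mem_erase hu3)
  have hu1' : u1 ∈ G.neighborSet v := by simpa using hu1
  have hu2' : u2 ∈ G.neighborSet v := by simpa using hu2N
  have hu3' : u3 ∈ G.neighborSet v := by simpa using hu3N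
  have htwo : ∀ u0 : V, ∃ a, a ∈ G.neighborSet v ∧ ∃ b, b ∈ G.neighborSet v ∧
      a ≠ b ∧ a ≠ u0 ∧ b ≠ u0 := by
    intro u0
    by_cases h1 : u0 = u1
    · subst h1
      exact ⟨u2, hu2', u3, hu3', h32.symm, h21, h31⟩
    · by_cases h2 : u0 = u2
      · subst h2
        exact ⟨u1, hu1', u3, hu3', h31.symm, fun h => h1 h.symm, h32⟩
      · exact ⟨u1, hu1', u2, hu2', h21.symm, fun h => h1 h.symm, fun h => h2 h.symm⟩
  -- every neighbor of v has a neighbor in R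
  have hRnbr : ∀ u ∈ G.neighborSet v, ∃ y, y ∈ R ∧ G.Adj u y := by
    intro u hu
    have h2 : 2 ≤ (G.neighborFinset u).card := hdeg2 u hu
    have hvmem : v ∈ G.neighborFinset u := by
      rw [SimpleGraph.mem_neighborFinset]
      exact G.adj_symm hu
    obtain ⟨y, hy⟩ := Finset.card_pos.1
      (show 0 < ((G.neighborFinset u).erase v).card by
        rw [Finset.card_erase_of_mem hvmem]; omega)
    have hyv : y ≠ v := Finset.ne_of_mem_erase hy
    have hyu : G.Adj u y := by
      have := Finset.mem_of_mem_erase hy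
      rwa [SimpleGraph.mem_neighborFinset] at this
    have hyN : y ∉ G.neighborSet v := fun hyN => hind u hu y hyN hyu
    exact ⟨y, (hmemR y).2 ⟨hyN, hyv⟩, hyu⟩
  -- Part B: every connected safe set has weight at least 2 + ρ
  have hB : ∀ T : Set V, IsSafeSet G w T → (G.induce T).Connected → 2 + ρ ≤ setWeight w T := by
    intro T hT hTc
    obtain ⟨hTne, hTuniv, hsafe⟩ := hT
    have hCT : IsComponentOf G T T := isComponentOf_self G T hTc
    by_cases hvT : v ∈ T
    · by_cases huT : ∃ u, u ∈ G.neighborSet v ∧ u ∈ T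
      · obtain ⟨ua, huaN, huaT⟩ := huT
        have hvua : v ≠ ua := (hNv ua huaN).symm
        by_cases hub : ∃ u', (u' ∈ G.neighborSet v ∧ u' ∈ T) ∧ u' ≠ ua
        · obtain ⟨ub, ⟨hubN, hubT⟩, hubA⟩ := hub
          have hsub : ({v, ua, ub} : Set V) ⊆ T := by
            rw [Set.insert_subset_iff, Set.insert_subset_iff, Set.singleton_subset_iff]
            exact ⟨hvT, huaT, hubT⟩
          have htrip : setWeight w {v, ua, ub} = 3 := by
            rw [setWeight_triple w hvua ((hNv ub hubN).symm) (fun h => hubA h.symm),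
              hwv, hwu ua huaN, hwu ub hubN]
            norm_num
          have := setWeight_mono w hw0' hsub
          rw [htrip] at this
          linarith
        · by_cases hx : ∃ x, x ∈ R ∧ x ∈ T
          · obtain ⟨x, hxR, hxT⟩ := hx
            have hsub : ({v, ua, x} : Set V) ⊆ T := by
              rw [Set.insert_subset_iff, Set.insert_subset_iff, Set.singleton_subset_iff]
              exact ⟨hvT, huaT, hxT⟩
            have htrip : setWeight w {v, ua, x} = 2 + ρ := by
              rw [setWeight_triple w hvua (fun h => hvR (by rw [h]; exact hxR))
                (fun h => hNR ua huaN (by rw [h]; exact hxR)), hwv, hwu ua huaN, hwR x hxR]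
              ring
            have := setWeight_mono w hw0' hsub
            rw [htrip] at this
            exact this
          · exfalso
            have hTeq : T = {v, ua} := by
              ext z
              simp only [Set.mem_insert_iff, Set.mem_singleton_iff]
              constructor
              · intro hzT
                rcases htri z with hzN | rfl | hzR
                · right; by_contra hne; exact hub ⟨z, ⟨hzN, hzT⟩, hne⟩
                · left; rfl
                · exact absurd ⟨z, hzR, hzT⟩ hx
              · rintro (rfl | rfl)
                · exact hvT
                · exact huaT
            obtain ⟨a, haN, b, hbN, hab, haua, hbua⟩ := htwo ua
            have haT : a ∉ T := by
              rw [hTeq]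
              simp only [Set.mem_insert_iff, Set.mem_singleton_iff]
              rintro (rfl | rfl)
              · exact hNv _ haN rfl
              · exact haua rfl
            have hbT : b ∉ T := by
              rw [hTeq]
              simp only [Set.mem_insert_iff, Set.mem_singleton_iff]
              rintro (rfl | rfl)
              · exact hNv _ hbN rfl
              · exact hbua rfl
            have hRTc : R ⊆ Tᶜ := by
              intro x hxR
              rw [Set.mem_compl_iff, hTeq]
              simp only [Set.mem_insert_iff, Set.mem_singleton_iff]
              rintro (rfl | rfl)
              · exact hvR hxR
              · exact hNR _ huaN hxR
            obtain ⟨ya, hyaR, haya⟩ := hRnbr a haN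
            obtain ⟨yb, hybR, hbyb⟩ := hRnbr b hbN
            have haTc : a ∈ Tᶜ := Set.mem_compl haT
            have hbTc : b ∈ Tᶜ := Set.mem_compl hbT
            set D : Set V := Subtype.val '' {y : ↥(Tᶜ) |
              (G.induce Tᶜ).connectedComponentMk y
                = (G.induce Tᶜ).connectedComponentMk ⟨a, haTc⟩} with hDdef
            have hDcomp : IsComponentOf G Tᶜ D := ⟨_, rfl⟩
            have hmemD : ∀ z : V, z ∈ D ↔ ∃ hz : z ∈ Tᶜ,
                (G.induce Tᶜ).Reachable ⟨z, hz⟩ ⟨a, haTc⟩ :=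
              fun z => mem_component_iff G Tᶜ ⟨a, haTc⟩ z
            have haD : a ∈ D := (hmemD a).2 ⟨haTc, SimpleGraph.Reachable.refl _⟩
            have hyaD : ya ∈ D := (hmemD ya).2 ⟨hRTc hyaR,
              SimpleGraph.Adj.reachable
                (induce_adj_of_adj G (hRTc hyaR) haTc haya.symm)⟩
            have hbD : b ∈ D := by
              refine (hmemD b).2 ⟨hbTc, ?_⟩
              have r1 : (G.induce Tᶜ).Reachable ⟨b, hbTc⟩ ⟨yb, hRTc hybR⟩ :=
                SimpleGraph.Adj.reachable (induce_adj_of_adj G hbTc (hRTc hybR) hbyb)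
              have r2 : (G.induce Tᶜ).Reachable ⟨yb, hRTc hybR⟩ ⟨ya, hRTc hyaR⟩ :=
                reachable_mono G hRTc (hconn.preconnected ⟨yb, hybR⟩ ⟨ya, hyaR⟩)
              have r3 : (G.induce Tᶜ).Reachable ⟨ya, hRTc hyaR⟩ ⟨a, haTc⟩ :=
                SimpleGraph.Adj.reachable (induce_adj_of_adj G (hRTc hyaR) haTc haya.symm)
              exact (r1.trans r2).trans r3
            have hsubD : ({a, b, ya} : Set V) ⊆ D := by
              rw [Set.insert_subset_iff, Set.insert_subset_iff, Set.singleton_subset_iff]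
              exact ⟨haD, hbD, hyaD⟩
            have hD3 : 2 + ρ ≤ setWeight w D := by
              have hmono := setWeight_mono w hw0' hsubD
              rw [setWeight_triple w hab (fun h => hNR a haN (by rw [h]; exact hyaR))
                (fun h => hNR b hbN (by rw [h]; exact hyaR)), hwu a haN, hwu b hbN, hwR ya hyaR] at hmono
              linarith
            have htouch : Touches G T D := ⟨v, hvT, a, haD, by simpa using haN⟩
            have hle := hsafe T D hCT hDcomp htouch
            have hT2 : setWeight w T = 2 := by
              rw [hTeq, setWeight_pair w hvua, hwv, hwu ua huaN]
              norm_num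
            linarith
      · exfalso
        have hviso : ∀ y : ↥T, ¬ (G.induce T).Adj ⟨v, hvT⟩ y := by
          rintro ⟨y, hyT⟩ hadj
          have : G.Adj v y := by simpa using hadj
          exact huT ⟨y, this, hyT⟩
        have hTv : ∀ z ∈ T, z = v := by
          intro z hzT
          have := reachable_of_isolated _ hviso (hTc.preconnected ⟨v, hvT⟩ ⟨z, hzT⟩)
          exact (congrArg Subtype.val this).symm
        have hu1T : u1 ∉ T := fun h => hNv u1 hu1' (hTv u1 h)
        obtain ⟨y1, hy1R, h1y1⟩ := hRnbr u1 hu1'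
        have hy1T : y1 ∉ T := fun h => hvR ((hTv y1 h) ▸ hy1R)
        have hu1Tc : u1 ∈ Tᶜ := Set.mem_compl hu1T
        have hy1Tc : y1 ∈ Tᶜ := Set.mem_compl hy1T
        set D : Set V := Subtype.val '' {y : ↥(Tᶜ) |
          (G.induce Tᶜ).connectedComponentMk y
            = (G.induce Tᶜ).connectedComponentMk ⟨u1, hu1Tc⟩} with hDdef
        have hDcomp : IsComponentOf G Tᶜ D := ⟨_, rfl⟩
        have hmemD : ∀ z : V, z ∈ D ↔ ∃ hz : z ∈ Tᶜ,
            (G.induce Tᶜ).Reachable ⟨z, hz⟩ ⟨u1, hu1Tc⟩ :=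
          fun z => mem_component_iff G Tᶜ ⟨u1, hu1Tc⟩ z
        have hu1D : u1 ∈ D := (hmemD u1).2 ⟨hu1Tc, SimpleGraph.Reachable.refl _⟩
        have hy1D : y1 ∈ D := (hmemD y1).2 ⟨hy1Tc,
          SimpleGraph.Adj.reachable (induce_adj_of_adj G hy1Tc hu1Tc h1y1.symm)⟩
        have hsubD : ({u1, y1} : Set V) ⊆ D := by
          rw [Set.insert_subset_iff, Set.singleton_subset_iff]
          exact ⟨hu1D, hy1D⟩
        have hD2 : 1 + ρ ≤ setWeight w D := by
          have hmono := setWeight_mono w hw0' hsubD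
          rw [setWeight_pair w (fun h => hNR u1 hu1' (by rw [h]; exact hy1R)), hwu u1 hu1',
            hwR y1 hy1R] at hmono
          linarith
        have htouch : Touches G T D := ⟨v, hvT, u1, hu1D, by simpa using hu1'⟩
        have hle := hsafe T D hCT hDcomp htouch
        have hT1 : setWeight w T = 1 := by
          have hTeq : T = {v} := by
            ext z
            simp only [Set.mem_singleton_iff]
            exact ⟨fun h => hTv z h, fun h => h ▸ hvT⟩
          rw [hTeq, setWeight_singleton, hwv]
        linarith
    · -- v ∉ T
      have hvTc : v ∈ Tᶜ := Set.mem_compl hvT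
      set Dv : Set V := Subtype.val '' {y : ↥(Tᶜ) |
        (G.induce Tᶜ).connectedComponentMk y
          = (G.induce Tᶜ).connectedComponentMk ⟨v, hvTc⟩} with hDvdef
      have hDvcomp : IsComponentOf G Tᶜ Dv := ⟨_, rfl⟩
      have hmemDv : ∀ z : V, z ∈ Dv ↔ ∃ hz : z ∈ Tᶜ,
          (G.induce Tᶜ).Reachable ⟨z, hz⟩ ⟨v, hvTc⟩ :=
        fun z => mem_component_iff G Tᶜ ⟨v, hvTc⟩ z
      have hvDv : v ∈ Dv := (hmemDv v).2 ⟨hvTc, SimpleGraph.Reachable.refl _⟩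
      have hNmem : ∀ u ∈ G.neighborSet v, u ∉ T → u ∈ Dv := by
        intro u huN huTn
        exact (hmemDv u).2 ⟨Set.mem_compl huTn,
          SimpleGraph.Adj.reachable (induce_adj_of_adj G (Set.mem_compl huTn) hvTc
            (G.adj_symm (by simpa using huN)))⟩
      by_cases h2u : ∃ a, (a ∈ G.neighborSet v ∧ a ∈ T) ∧
          ∃ b, (b ∈ G.neighborSet v ∧ b ∈ T) ∧ a ≠ b
      · obtain ⟨a, ⟨haN, haT⟩, b, ⟨hbN, hbT⟩, hab⟩ := h2u
        by_cases hx : ∃ x, x ∈ R ∧ x ∈ T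
        · obtain ⟨x, hxR, hxT⟩ := hx
          have hsub : ({a, b, x} : Set V) ⊆ T := by
            rw [Set.insert_subset_iff, Set.insert_subset_iff, Set.singleton_subset_iff]
            exact ⟨haT, hbT, hxT⟩
          have htrip : setWeight w {a, b, x} = 2 + ρ := by
            rw [setWeight_triple w hab (fun h => hNR a haN (by rw [h]; exact hxR))
              (fun h => hNR b hbN (by rw [h]; exact hxR)), hwu a haN, hwu b hbN, hwR x hxR]
            ring
          have := setWeight_mono w hw0' hsub
          rw [htrip] at this
          exact this
        · exfalso
          have hTN : ∀ z ∈ T, z ∈ G.neighborSet v := by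
            intro z hzT
            rcases htri z with h | rfl | h
            · exact h
            · exact absurd hzT hvT
            · exact absurd ⟨z, h, hzT⟩ hx
          have haiso : ∀ y : ↥T, ¬ (G.induce T).Adj ⟨a, haT⟩ y := by
            rintro ⟨y, hyT⟩ hadj
            exact hind a haN y (hTN y hyT) (by simpa using hadj)
          have := reachable_of_isolated _ haiso (hTc.preconnected ⟨a, haT⟩ ⟨b, hbT⟩)
          exact hab (congrArg Subtype.val this)
      · by_cases hu0 : ∃ u0, u0 ∈ G.neighborSet v ∧ u0 ∈ T
        · obtain ⟨u0, hu0N, hu0T⟩ := hu0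
          exfalso
          have huniq : ∀ z ∈ T, z ∈ G.neighborSet v → z = u0 := by
            intro z hzT hzN
            by_contra hne
            exact h2u ⟨z, ⟨hzN, hzT⟩, u0, ⟨hu0N, hu0T⟩, hne⟩
          have hTsub : T ⊆ insert u0 R := by
            intro z hzT
            rcases htri z with h | rfl | h
            · exact Set.mem_insert_iff.2 (Or.inl (huniq z hzT h))
            · exact absurd hzT hvT
            · exact Set.mem_insert_iff.2 (Or.inr h)
          have hwT2 : setWeight w T ≤ 2 := by
            have hmono := setWeight_mono w hw0' hTsub
            rw [setWeight_insert w u0 R (hNR u0 hu0N), hwNR u0 (hNR u0 hu0N), hWR] at hmono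
            linarith
          obtain ⟨a, haN, b, hbN, hab, ha0, hb0⟩ := htwo u0
          have haT : a ∉ T := fun h => ha0 (huniq a h haN)
          have hbT : b ∉ T := fun h => hb0 (huniq b h hbN)
          have hsubD : ({v, a, b} : Set V) ⊆ Dv := by
            rw [Set.insert_subset_iff, Set.insert_subset_iff, Set.singleton_subset_iff]
            exact ⟨hvDv, hNmem a haN haT, hNmem b hbN hbT⟩
          have h3 : 3 ≤ setWeight w Dv := by
            have hmono := setWeight_mono w hw0' hsubD
            rw [setWeight_triple w ((hNv a haN).symm) ((hNv b hbN).symm) hab,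
              hwv, hwu a haN, hwu b hbN] at hmono
            linarith
          have htouch : Touches G T Dv := ⟨u0, hu0T, v, hvDv,
            G.adj_symm (by simpa using hu0N)⟩
          have hle := hsafe T Dv hCT hDvcomp htouch
          linarith
        · exfalso
          have hTR : T ⊆ R := by
            intro z hzT
            rcases htri z with h | rfl | h
            · exact absurd ⟨z, h, hzT⟩ hu0
            · exact absurd hzT hvT
            · exact h
          have hwT1 : setWeight w T ≤ 1 := by
            have := setWeight_mono w hw0' hTR
            rw [hWR] at this
            exact this
          have hu1T : u1 ∉ T := fun h => hNR u1 hu1' (hTR h)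
          have hu2T : u2 ∉ T := fun h => hNR u2 hu2' (hTR h)
          have hsubD : ({v, u1, u2} : Set V) ⊆ Dv := by
            rw [Set.insert_subset_iff, Set.insert_subset_iff, Set.singleton_subset_iff]
            exact ⟨hvDv, hNmem u1 hu1' hu1T, hNmem u2 hu2' hu2T⟩
          have h3 : 3 ≤ setWeight w Dv := by
            have hmono := setWeight_mono w hw0' hsubD
            rw [setWeight_triple w ((hNv u1 hu1').symm) ((hNv u2 hu2').symm) h21.symm,
              hwv, hwu u1 hu1', hwu u2 hu2'] at hmono
            linarith
          obtain ⟨t0, ht0T⟩ := hTne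
          obtain ⟨y1, hy1R, h1y1⟩ := hRnbr u1 hu1'
          by_cases hy1T : y1 ∈ T
          · have htouch : Touches G T Dv :=
              ⟨y1, hy1T, u1, hNmem u1 hu1' hu1T, h1y1.symm⟩
            have hle := hsafe T Dv hCT hDvcomp htouch
            linarith
          · have hy1Tc : y1 ∈ Tᶜ := Set.mem_compl hy1T
            have hu1Tc : u1 ∈ Tᶜ := Set.mem_compl hu1T
            have hreachv : (G.induce Tᶜ).Reachable ⟨y1, hy1Tc⟩ ⟨v, hvTc⟩ :=
              (SimpleGraph.Adj.reachable
                (induce_adj_of_adj G hy1Tc hu1Tc h1y1.symm)).trans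
                (SimpleGraph.Adj.reachable (induce_adj_of_adj G hu1Tc hvTc
                  (G.adj_symm (by simpa using hu1'))))
            obtain ⟨W⟩ := hconn.preconnected ⟨y1, hy1R⟩ ⟨t0, hTR ht0T⟩
            obtain ⟨p, hp, z, hz, hadj, hreach⟩ := exists_boundary G T W hy1T ht0T
            have hpDv : p ∈ Dv := (hmemDv p).2 ⟨Set.mem_compl hp,
              ((hreach hy1Tc).symm.trans hreachv)⟩
            have htouch : Touches G T Dv := ⟨z, hz, p, hpDv, hadj.symm⟩
            have hle := hsafe T Dv hCT hDvcomp htouch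
            linarith
  -- the disconnected safe set S0
  set S0 : Set V := insert v R with hS0def
  have hvS0 : v ∈ S0 := Set.mem_insert v R
  have hRS0 : R ⊆ S0 := Set.subset_insert v R
  have hS0compl : S0ᶜ = G.neighborSet v := by
    ext z
    simp only [hS0def, Set.mem_compl_iff, Set.mem_insert_iff, not_or]
    constructor
    · rintro ⟨h1, h2⟩
      rcases htri z with h | h | h
      · exact h
      · exact absurd h h1
      · exact absurd h h2
    · intro hz
      exact ⟨fun h => hNv z hz h, hNR z hz⟩
  have hviso0 : ∀ y : ↥S0, ¬ (G.induce S0).Adj ⟨v, hvS0⟩ y := by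
    rintro ⟨y, hyS0⟩ hadj
    have hadj' : G.Adj v y := by simpa using hadj
    rcases Set.mem_insert_iff.1 hyS0 with rfl | hyR
    · exact G.loopless.irrefl y hadj'
    · exact hNR y hadj' hyR
  have hS0safe : IsSafeSet G w S0 := by
    refine ⟨⟨v, hvS0⟩, ?_, ?_⟩
    · intro h
      have hmem : u1 ∈ S0 := h ▸ Set.mem_univ u1
      rcases Set.mem_insert_iff.1 hmem with h' | h'
      · exact hNv u1 hu1' h'
      · exact hNR u1 hu1' h'
    · intro C D hC hD htouch
      obtain ⟨xD, hDeq⟩ := isComponentOf_rep G S0ᶜ D hD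
      have hxDN : xD.1 ∈ G.neighborSet v := (Set.ext_iff.1 hS0compl xD.1).1 xD.2
      have hDiso : ∀ y : ↥(S0ᶜ), ¬ (G.induce S0ᶜ).Adj xD y := by
        rintro ⟨y, hy⟩ hadj
        have hyN : y ∈ G.neighborSet v := (Set.ext_iff.1 hS0compl y).1 hy
        exact hind xD.1 hxDN y hyN (by simpa using hadj)
      have hDval : D = {xD.1} := by
        rw [hDeq]
        exact component_eq_singleton G S0ᶜ xD hDiso
      have hDW : setWeight w D = 1 := by
        rw [hDval, setWeight_singleton, hwu xD.1 hxDN]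
      obtain ⟨xC, hCeq⟩ := isComponentOf_rep G S0 C hC
      rcases Set.mem_insert_iff.1 xC.2 with hxv | hxR
      · have hCiso : ∀ y : ↥S0, ¬ (G.induce S0).Adj xC y := by
          intro y
          have hxx : xC = ⟨v, hvS0⟩ := Subtype.ext hxv
          rw [hxx]
          exact hviso0 y
        have hCval : C = {xC.1} := by
          rw [hCeq]
          exact component_eq_singleton G S0 xC hCiso
        rw [hDW, hCval, setWeight_singleton, hxv, hwv]
      · have hRC : R ⊆ C := by
          rw [hCeq]
          exact subset_component G hRS0 hconn.preconnected xC hxR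
        have := setWeight_mono w hw0' hRC
        rw [hWR] at this
        rw [hDW]
        linarith
  -- assemble
  have hS0W : setWeight w S0 = 2 := by
    rw [hS0def, setWeight_insert w v R hvR, hwv, hWR]
    norm_num
  have hbdd : BddBelow (setWeight w '' {S | IsSafeSet G w S}) := by
    refine ⟨0, ?_⟩
    rintro x ⟨S, hS, rfl⟩
    exact setWeight_nonneg w hw0' S
  have hle2 : safeNumber G w ≤ 2 := by
    rw [safeNumber, ← hS0W]
    exact csInf_le hbdd ⟨S0, hS0safe, rfl⟩
  have hgeρ : ρ ≤ safeNumber G w := by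
    rw [safeNumber]
    refine le_csInf ⟨_, ⟨S0, hS0safe, rfl⟩⟩ ?_
    rintro x ⟨S, hS, rfl⟩
    calc ρ ≤ w hS.1.choose := hwge _
    _ = setWeight w {hS.1.choose} := (setWeight_singleton w _).symm
    _ ≤ setWeight w S := setWeight_mono w hw0'
        (Set.singleton_subset_iff.2 hS.1.choose_spec)
  have heq := hIn w hw0
  rcases Set.eq_empty_or_nonempty (setWeight w '' {S | IsConnSafeSet G w S}) with hemp | hne
  · rw [connSafeNumber, hemp, Real.sInf_empty] at heq
    linarith
  · have hconnlb : 2 + ρ ≤ connSafeNumber G w := by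
      rw [connSafeNumber]
      refine le_csInf hne ?_
      rintro x ⟨S, hS, rfl⟩
      exact hB S hS.1 hS.2
    linarith
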